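/- arXiv:1102.5683 — 6 statements merged into one kernel-verified Lean document; each statement's English description precedes it below -/
import Mathlib

section
/- Let B and M be positive integers with B > 2M, and let a, a', c be positive integers satisfying 2a'+1 ≥ B, a'+cM ≤ a, and 2a - cB ≤ a'. Then a' ≤ c(B-2M) and c ≥ (B-1)/(2(B-2M)); consequently a ≥ ⌈(B-1)/2⌉ + ⌈(B-1)/(2(B-2M))⌉·M. -/
theorem srz_parameters_optimal (B M a a' c : ℤ) (hM : 0 < M) (hB : B > 2 * M)
    (hapos : 0 < a) (ha'pos : 0 < a') (hcpos : 0 < c)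
    (h1 : 2 * a' + 1 ≥ B) (h2 : a' + c * M ≤ a) (h3 : 2 * a - c * B ≤ a') :
    a' ≤ c * (B - 2 * M) ∧
    (c : ℝ) ≥ ((B : ℝ) - 1) / (2 * ((B : ℝ) - 2 * M)) ∧
    a ≥ ⌈((B : ℝ) - 1) / 2⌉ + ⌈((B : ℝ) - 1) / (2 * ((B : ℝ) - 2 * M))⌉ * M := by
  have hpart1 : a' ≤ c * (B - 2 * M) := by nlinarith
  have hd : (0:ℝ) < 2 * ((B:ℝ) - 2 * M) := by
    have : (2:ℤ) * M < B := hB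
    have : (2:ℝ) * M < B := by exact_mod_cast this
    linarith
  have hcast1 : (a':ℝ) ≤ (c:ℝ) * ((B:ℝ) - 2 * M) := by exact_mod_cast hpart1
  have h1' : 2 * (a':ℝ) + 1 ≥ (B:ℝ) := by exact_mod_cast h1
  have hpart2 : (c : ℝ) ≥ ((B : ℝ) - 1) / (2 * ((B : ℝ) - 2 * M)) := by
    rw [ge_iff_le, div_le_iff₀ hd]
    nlinarith
  refine ⟨hpart1, hpart2, ?_⟩
  have hc1 : ⌈((B : ℝ) - 1) / 2⌉ ≤ a' := by
    rw [Int.ceil_le]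
    push_cast
    linarith
  have hc2 : ⌈((B : ℝ) - 1) / (2 * ((B : ℝ) - 2 * M))⌉ ≤ c := by
    rw [Int.ceil_le]
    exact_mod_cast hpart2
  nlinarith [mul_le_mul_of_nonneg_right hc2 hM.le]
end

section
/- Let B and M be positive integers with B > 2M, and set c = ⌈(B-1)/(2(B-2M))⌉, a' = ⌈(B-1)/2⌉, a = a' + cM. For every integer z with |z| ≤ 2a there exists an integer q with |q| ≤ c such that |z - qB| ≤ a'. -/
lemma carry_aux (B a' c M z : ℤ) (hB : 0 < B) (ha1 : 1 ≤ a')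
    (h1 : B - 1 ≤ 2 * a') (h2 : 2 * a' ≤ B) (h3 : a' ≤ c * (B - 2 * M))
    (hcM : 0 ≤ c * M) (hz0 : 0 ≤ z) (hz : z ≤ 2 * a' + 2 * (c * M)) :
    ∃ q : ℤ, 0 ≤ q ∧ q ≤ c ∧ |z - q * B| ≤ a' := by
  set t := (a' - z) / B with htdef
  set r := (a' - z) % B with hrdef
  have hdm : B * t + r = a' - z := Int.mul_ediv_add_emod (a' - z) B
  have hr0 : 0 ≤ r := Int.emod_nonneg _ (by positivity)
  have hrB : r < B := Int.emod_lt_of_pos _ hB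
  refine ⟨-t, ?_, ?_, ?_⟩
  · -- 0 ≤ -t
    by_contra h
    push_neg at h
    have ht1 : 1 ≤ t := by omega
    have : B * 1 ≤ B * t := mul_le_mul_of_nonneg_left ht1 hB.le
    omega
  · -- -t ≤ c
    by_contra h
    push_neg at h
    have ht1 : t ≤ -c - 1 := by omega
    have hmul : B * t ≤ B * (-c - 1) := mul_le_mul_of_nonneg_left ht1 hB.le
    have hcb : B * (-c - 1) = -(c * (B - 2 * M)) - 2 * (c * M) - B := by ring
    linarith [hdm, hr0, hrB, h3, hz]
  · -- |z - (-t) * B| ≤ a'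
    have : z - (-t) * B = a' - r := by linarith [hdm]
    rw [this, abs_le]
    omega

theorem carry_digit_exists (B M : ℤ) (hM : 0 < M) (hB : B > 2 * M)
    (c a' a : ℤ)
    (hc : c = ⌈((B : ℝ) - 1) / (2 * ((B : ℝ) - 2 * M))⌉)
    (ha' : a' = ⌈((B : ℝ) - 1) / 2⌉)
    (ha : a = a' + c * M)
    (z : ℤ) (hz : |z| ≤ 2 * a) :
    ∃ q : ℤ, |q| ≤ c ∧ |z - q * B| ≤ a' := by
  have hB3 : 3 ≤ B := by omega
  have hD : (0 : ℝ) < 2 * ((B : ℝ) - 2 * M) := by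
    have : (2 * M : ℤ) < B := hB
    have : (2 * (M : ℝ)) < (B : ℝ) := by exact_mod_cast this
    linarith
  have hBR : (1 : ℝ) < (B : ℝ) := by exact_mod_cast (by omega : (1:ℤ) < B)
  -- facts about a'
  have ha'lb : ((B : ℝ) - 1) / 2 ≤ (a' : ℝ) := ha' ▸ Int.le_ceil _
  have ha'ub : (a' : ℝ) < ((B : ℝ) - 1) / 2 + 1 := ha' ▸ Int.ceil_lt_add_one _
  have h1 : B - 1 ≤ 2 * a' := by
    have : (B : ℝ) - 1 ≤ 2 * (a' : ℝ) := by linarith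
    exact_mod_cast this
  have h2 : 2 * a' ≤ B := by
    have : 2 * (a' : ℝ) < (B : ℝ) + 1 := by linarith
    have : 2 * a' < B + 1 := by exact_mod_cast this
    omega
  have ha1 : 1 ≤ a' := by omega
  -- facts about c
  have hc1 : 1 ≤ c := by
    rw [hc]
    exact Int.ceil_pos.mpr (div_pos (by linarith) hD)
  have hclb : ((B : ℝ) - 1) / (2 * ((B : ℝ) - 2 * M)) ≤ (c : ℝ) := hc ▸ Int.le_ceil _
  have hX : B - 1 ≤ 2 * (c * (B - 2 * M)) := by
    have hr : (B : ℝ) - 1 ≤ (c : ℝ) * (2 * ((B : ℝ) - 2 * M)) :=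
      (div_le_iff₀ hD).mp hclb
    have : (B : ℝ) - 1 ≤ 2 * ((c : ℝ) * ((B : ℝ) - 2 * M)) := by linarith
    exact_mod_cast this
  have h3 : a' ≤ c * (B - 2 * M) := by
    obtain ⟨X, hXdef⟩ : ∃ X, X = c * (B - 2 * M) := ⟨_, rfl⟩
    rw [← hXdef] at hX ⊢
    omega
  have hcM : 0 ≤ c * M := mul_nonneg (by omega) hM.le
  have habs : |z| ≤ 2 * a' + 2 * (c * M) := by rw [ha] at hz; omega
  obtain ⟨q, hq0, hqc, hqr⟩ :=
    carry_aux B a' c M |z| (by omega) ha1 h1 h2 h3 hcM (abs_nonneg z) habs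
  rcases le_or_gt 0 z with hzs | hzs
  · refine ⟨q, by rwa [abs_of_nonneg hq0], by rwa [abs_of_nonneg hzs] at hqr⟩
  · refine ⟨-q, by rw [abs_neg, abs_of_nonneg hq0]; exact hqc, ?_⟩
    rw [abs_of_neg hzs] at hqr
    have : z - -q * B = -(-z - q * B) := by ring
    rw [this, abs_neg]
    exact hqr
end

section
/- Let β be a complex number with |β| > 1 that is SRZ, i.e., β is a root of a polynomial S(X) = ∑_{i=-h}^{k} b_i X^i with integer coefficients such that b_0 > 2·∑_{i≠0} |b_i|. Set B = b_0, M = ∑_{i≠0} |b_i|, a = ⌈(B-1)/2⌉ + ⌈(B-1)/(2(B-2M))⌉·M, and A = {-a,…,a}. Then the set Fin_A(β) = { ∑_{i∈I} x_i β^i : I ⊂ ℤ finite, x_i ∈ A } is closed under addition. -/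
open Function Finset

/-- `FinA β a` is the set of numbers with a finite β-representation with
integer digits of absolute value at most `a`. -/
def FinA (β : ℂ) (a : ℤ) : Set ℂ :=
  {x : ℂ | ∃ f : ℤ → ℤ, (Function.support f).Finite ∧ (∀ i, |f i| ≤ a) ∧
      x = ∑ᶠ i : ℤ, (f i : ℂ) * β ^ i}

/-- One-digit conversion: subtracting a suitable multiple of `B` brings a digit
into `[-A', A']`, with a controlled quotient. -/
lemma digit_step (B A' c : ℤ) (hB1 : 1 ≤ B)
    (hA'0 : 0 ≤ A') (hA'1 : B - 1 ≤ 2 * A') (hA'B : A' ≤ B - 1) (hc0 : 0 ≤ c)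
    (bound : ℤ) (hbound : bound - A' ≤ c * B)
    (n : ℤ) (hn : |n| ≤ bound) :
    |n - (n.sign * ⌈((|n| : ℝ) - (A' : ℝ)) / (B : ℝ)⌉) * B| ≤ A' ∧
      |n.sign * ⌈((|n| : ℝ) - (A' : ℝ)) / (B : ℝ)⌉| ≤ c := by
  have hBR : (0:ℝ) < (B : ℝ) := by exact_mod_cast hB1
  set t : ℤ := ⌈((|n| : ℝ) - (A' : ℝ)) / (B : ℝ)⌉ with ht
  have ht0 : 0 ≤ t := by
    have : (-1 : ℤ) < t := by
      rw [ht]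
      refine Int.lt_ceil.mpr ?_
      rw [lt_div_iff₀ hBR]
      push_cast
      have : (0:ℝ) ≤ (|n| : ℤ) := by exact_mod_cast abs_nonneg n
      push_cast at this
      nlinarith [(show (A' : ℝ) ≤ (B:ℝ) - 1 from by exact_mod_cast hA'B)]
    omega
  have htc : t ≤ c := by
    rw [ht]
    refine Int.ceil_le.mpr ?_
    rw [div_le_iff₀ hBR]
    have h1 : |n| - A' ≤ c * B := le_trans (by omega) hbound
    exact_mod_cast h1
  have h1 : |n| - A' ≤ t * B := by
    have hle := Int.le_ceil (((|n| : ℝ) - (A' : ℝ)) / (B : ℝ))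
    rw [← ht, div_le_iff₀ hBR] at hle
    have h' : ((|n| - A' : ℤ) : ℝ) ≤ ((t * B : ℤ) : ℝ) := by push_cast; push_cast at hle; linarith
    exact_mod_cast h' 
  have h2 : t * B < |n| - A' + B := by
    have := Int.ceil_lt_add_one (((|n| : ℝ) - (A' : ℝ)) / (B : ℝ))
    rw [← ht] at this
    have h0 : ((t - 1 : ℤ) : ℝ) < ((|n| : ℝ) - A') / B := by push_cast; linarith
    rw [lt_div_iff₀ hBR] at h0
    have h' : ((t * B : ℤ) : ℝ) < ((|n| - A' + B : ℤ) : ℝ) := by push_cast; push_cast at h0; linarith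
    exact_mod_cast h'
  rcases lt_trichotomy n 0 with hn0 | hn0 | hn0
  · rw [Int.sign_eq_neg_one_of_neg hn0]
    have habs : |n| = -n := abs_of_neg hn0
    rw [habs] at h1 h2
    constructor
    · rw [abs_le]; constructor <;> nlinarith
    · rw [neg_one_mul, abs_neg, abs_of_nonneg ht0]; exact htc
  · subst hn0; simp [hA'0, hc0]
  · rw [Int.sign_eq_one_of_pos hn0]
    have habs : |n| = n := abs_of_pos hn0
    rw [habs] at h1 h2
    constructor
    · rw [abs_le]; constructor <;> nlinarith
    · rw [one_mul, abs_of_nonneg ht0]; exact htc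

lemma reduce (β : ℂ) (hβ : 1 < ‖β‖)
    (h k : ℕ) (b : ℤ → ℤ)
    (hroot : ∑ i ∈ Finset.Icc (-(h : ℤ)) (k : ℤ), (b i : ℂ) * β ^ i = 0)
    (B M : ℤ) (hB : B = b 0)
    (hM : M = ∑ i ∈ (Finset.Icc (-(h : ℤ)) (k : ℤ)).erase 0, |b i|)
    (hstrong : B > 2 * M)
    (a : ℤ)
    (ha : a = ⌈((B : ℝ) - 1) / 2⌉ + ⌈((B : ℝ) - 1) / (2 * ((B : ℝ) - 2 * M))⌉ * M)
    (d : ℤ → ℤ) (hdf : (Function.support d).Finite)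
    (hd : ∀ i, |d i| ≤ 2 * a) :
    (∑ᶠ i : ℤ, (d i : ℂ) * β ^ i) ∈ FinA β a := by
  have hβ0 : β ≠ 0 := by
    intro hc; rw [hc] at hβ; simp at hβ; linarith
  have hM0 : 0 ≤ M := by
    rw [hM]; exact Finset.sum_nonneg fun i _ => abs_nonneg _
  have hB1 : 1 ≤ B := by omega
  set A' : ℤ := ⌈((B : ℝ) - 1) / 2⌉ with hA'def
  set c : ℤ := ⌈((B : ℝ) - 1) / (2 * ((B : ℝ) - 2 * M))⌉ with hcdef
  have hBR : (1:ℝ) ≤ (B : ℝ) := by exact_mod_cast hB1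
  have hDR : (0:ℝ) < (B : ℝ) - 2 * M := by
    have h0 : (0:ℤ) < B - 2 * M := by omega
    calc (0:ℝ) < ((B - 2 * M : ℤ) : ℝ) := by exact_mod_cast h0
      _ = (B : ℝ) - 2 * M := by push_cast; ring
  have hA'0 : 0 ≤ A' := Int.ceil_nonneg (by linarith [div_nonneg (by linarith : (0:ℝ) ≤ (B:ℝ) - 1) (by norm_num : (0:ℝ) ≤ 2)])
  have hA'1 : B - 1 ≤ 2 * A' := by
    have hle := Int.le_ceil (((B : ℝ) - 1) / 2)
    rw [← hA'def, div_le_iff₀ (by norm_num : (0:ℝ) < 2)] at hle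
    have h' : ((B - 1 : ℤ) : ℝ) ≤ ((2 * A' : ℤ) : ℝ) := by push_cast; linarith
    exact_mod_cast h' 
  have hA'B : A' ≤ B - 1 := by
    rw [hA'def]
    refine Int.ceil_le.mpr ?_
    rw [div_le_iff₀ (by norm_num : (0:ℝ) < 2)]
    push_cast; linarith
  have hc0 : 0 ≤ c :=
    Int.ceil_nonneg (div_nonneg (by linarith) (by linarith))
  have hcD : A' ≤ c * (B - 2 * M) := by
    have hle := Int.le_ceil (((B : ℝ) - 1) / (2 * ((B : ℝ) - 2 * M)))
    rw [← hcdef, div_le_iff₀ (by positivity)] at hle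
    rw [hA'def]
    refine Int.ceil_le.mpr ?_
    rw [div_le_iff₀ (by norm_num : (0:ℝ) < 2)]
    push_cast
    nlinarith
  have hbound : 2 * a - A' ≤ c * B := by
    have hr : c * (B - 2 * M) = c * B - 2 * (c * M) := by ring
    rw [hr] at hcD
    omega
  -- the quotient function
  set q : ℤ → ℤ := fun i => (d i).sign * ⌈((|d i| : ℝ) - (A' : ℝ)) / (B : ℝ)⌉ with hqdef
  have key : ∀ i, |d i - q i * B| ≤ A' ∧ |q i| ≤ c := fun i =>
    digit_step B A' c hB1 hA'0 hA'1 hA'B hc0 (2 * a) hbound (d i) (hd i)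
  have hq0 : ∀ i, d i = 0 → q i = 0 := by
    intro i hi; rw [hqdef]; simp [hi]
  set I : Finset ℤ := Finset.Icc (-(h : ℤ)) (k : ℤ) with hIdef
  have h0I : (0:ℤ) ∈ I := by
    rw [hIdef, Finset.mem_Icc]
    constructor <;> simp
  classical
  set D : Finset ℤ := hdf.toFinset with hDdef
  have hDmem : ∀ i, i ∈ D ↔ d i ≠ 0 := by
    intro i; rw [hDdef, Set.Finite.mem_toFinset]; rfl
  set T : Finset ℤ := D ∪ I.biUnion (fun j => D.image (· + j)) with hTdef
  set e : ℤ → ℤ := fun m => d m - ∑ j ∈ I, q (m - j) * b j with hedef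
  have hqzero : ∀ m, m ∉ T → ∀ j ∈ I, q (m - j) = 0 := by
    intro m hm j hj
    by_contra hne
    have hd' : d (m - j) ≠ 0 := fun hz => hne (hq0 _ hz)
    have : m ∈ T := by
      rw [hTdef]
      refine Finset.mem_union_right _ ?_
      refine Finset.mem_biUnion.mpr ⟨j, hj, ?_⟩
      exact Finset.mem_image.mpr ⟨m - j, (hDmem _).mpr hd', by ring⟩
    exact hm this
  have he_supp : ∀ m, m ∉ T → e m = 0 := by
    intro m hm
    have hdm : d m = 0 := by
      by_contra hne
      exact hm (by rw [hTdef]; exact Finset.mem_union_left _ ((hDmem _).mpr hne))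
    rw [hedef]
    simp only
    rw [hdm, Finset.sum_eq_zero fun j hj => by rw [hqzero m hm j hj, zero_mul]]
    ring
  have he_bound : ∀ m, |e m| ≤ a := by
    intro m
    have hsplit : e m = (d m - q m * B) - ∑ j ∈ I.erase 0, q (m - j) * b j := by
      have hsum : ∑ j ∈ I, q (m - j) * b j
          = q m * B + ∑ j ∈ I.erase 0, q (m - j) * b j := by
        rw [← Finset.add_sum_erase I _ h0I, sub_zero, hB]
      rw [hedef]
      simp only
      rw [hsum, sub_add_eq_sub_sub]
    rw [hsplit]
    have h1 : |∑ j ∈ I.erase 0, q (m - j) * b j| ≤ c * M := by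
      calc |∑ j ∈ I.erase 0, q (m - j) * b j|
          ≤ ∑ j ∈ I.erase 0, |q (m - j) * b j| := Finset.abs_sum_le_sum_abs _ _
        _ ≤ ∑ j ∈ I.erase 0, c * |b j| := by
            refine Finset.sum_le_sum fun j _ => ?_
            rw [abs_mul]
            exact mul_le_mul_of_nonneg_right (key _).2 (abs_nonneg _)
        _ = c * M := by rw [hM, Finset.mul_sum, hIdef]
    calc |d m - q m * B - ∑ j ∈ I.erase 0, q (m - j) * b j|
        ≤ |d m - q m * B| + |∑ j ∈ I.erase 0, q (m - j) * b j| := abs_sub _ _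
      _ ≤ A' + c * M := add_le_add (key m).1 h1
      _ = a := ha.symm
  refine ⟨e, ?_, he_bound, ?_⟩
  · exact Set.Finite.subset T.finite_toSet fun m hm => by
      by_contra hmT
      exact hm (he_supp m (by simpa using hmT))
  -- value is preserved
  have hsub1 : Function.support (fun i => (d i : ℂ) * β ^ i) ⊆ ↑T := by
    intro i hi
    have hd' : d i ≠ 0 := by
      intro hz
      apply hi; simp [hz]
    exact Finset.mem_coe.mpr (by rw [hTdef]; exact Finset.mem_union_left _ ((hDmem _).mpr hd'))
  have hsub2 : Function.support (fun i => (e i : ℂ) * β ^ i) ⊆ ↑T := by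
    intro i hi
    by_contra hiT
    apply hi
    simp [he_supp i (by simpa using hiT)]
  rw [finsum_eq_sum_of_support_subset _ hsub1, finsum_eq_sum_of_support_subset _ hsub2]
  have hinner : ∀ j ∈ I, ∑ m ∈ T, (q (m - j) : ℂ) * β ^ m
      = β ^ j * ∑ i ∈ D, (q i : ℂ) * β ^ i := by
    intro j hj
    have himg : D.image (· + j) ⊆ T := by
      intro m hm
      rw [hTdef]
      exact Finset.mem_union_right _ (Finset.mem_biUnion.mpr ⟨j, hj, hm⟩)
    have hz : ∀ m ∈ T, m ∉ D.image (· + j) → (q (m - j) : ℂ) * β ^ m = 0 := by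
      intro m _ hm
      have hnd : m - j ∉ D := by
        intro hcon
        exact hm (Finset.mem_image.mpr ⟨m - j, hcon, by ring⟩)
      have : d (m - j) = 0 := by
        by_contra hne
        exact hnd ((hDmem _).mpr hne)
      rw [hq0 _ this]
      simp
    rw [← Finset.sum_subset himg hz]
    rw [Finset.sum_image (by intro x _ y _ hxy; exact add_right_cancel hxy)]
    rw [Finset.mul_sum]
    refine Finset.sum_congr rfl fun i _ => ?_
    have : i + j - j = i := by ring
    rw [this, zpow_add₀ hβ0]
    ring
  have hzero : ∑ m ∈ T, (∑ j ∈ I, (q (m - j) : ℂ) * (b j : ℂ)) * β ^ m = 0 := by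
    calc ∑ m ∈ T, (∑ j ∈ I, (q (m - j) : ℂ) * (b j : ℂ)) * β ^ m
        = ∑ m ∈ T, ∑ j ∈ I, (q (m - j) : ℂ) * (b j : ℂ) * β ^ m := by
          exact Finset.sum_congr rfl fun m _ => by rw [Finset.sum_mul]
      _ = ∑ j ∈ I, ∑ m ∈ T, (q (m - j) : ℂ) * (b j : ℂ) * β ^ m := Finset.sum_comm
      _ = ∑ j ∈ I, (b j : ℂ) * β ^ j * ∑ i ∈ D, (q i : ℂ) * β ^ i := by
          refine Finset.sum_congr rfl fun j hj => ?_
          have hstep : ∑ m ∈ T, (q (m - j) : ℂ) * (b j : ℂ) * β ^ m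
              = (b j : ℂ) * ∑ m ∈ T, (q (m - j) : ℂ) * β ^ m := by
            rw [Finset.mul_sum]
            exact Finset.sum_congr rfl fun m _ => by ring
          rw [hstep, hinner j hj]
          ring
      _ = (∑ j ∈ I, (b j : ℂ) * β ^ j) * ∑ i ∈ D, (q i : ℂ) * β ^ i := by
          rw [Finset.sum_mul]
      _ = 0 := by rw [hroot, zero_mul]
  have hERw : ∀ m, (e m : ℂ) = (d m : ℂ) - ∑ j ∈ I, (q (m - j) : ℂ) * (b j : ℂ) := by
    intro m
    rw [hedef]
    push_cast
    ring
  calc ∑ m ∈ T, (d m : ℂ) * β ^ m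
      = ∑ m ∈ T, (d m : ℂ) * β ^ m
        - ∑ m ∈ T, (∑ j ∈ I, (q (m - j) : ℂ) * (b j : ℂ)) * β ^ m := by
        rw [hzero, sub_zero]
    _ = ∑ m ∈ T, ((d m : ℂ) * β ^ m
        - (∑ j ∈ I, (q (m - j) : ℂ) * (b j : ℂ)) * β ^ m) := by
        rw [Finset.sum_sub_distrib]
    _ = ∑ m ∈ T, (e m : ℂ) * β ^ m := by
        refine Finset.sum_congr rfl fun m _ => ?_
        rw [hERw]
        ring

theorem srz_addition_closed (β : ℂ) (hβ : 1 < ‖β‖)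
    (h k : ℕ) (b : ℤ → ℤ)
    (hroot : ∑ i ∈ Finset.Icc (-(h : ℤ)) (k : ℤ), (b i : ℂ) * β ^ i = 0)
    (B M : ℤ) (hB : B = b 0)
    (hM : M = ∑ i ∈ (Finset.Icc (-(h : ℤ)) (k : ℤ)).erase 0, |b i|)
    (hstrong : B > 2 * M)
    (a : ℤ)
    (ha : a = ⌈((B : ℝ) - 1) / 2⌉ + ⌈((B : ℝ) - 1) / (2 * ((B : ℝ) - 2 * M))⌉ * M) :
    ∀ x ∈ FinA β a, ∀ y ∈ FinA β a, x + y ∈ FinA β a := by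
  rintro x ⟨f, hf, hfa, rfl⟩ y ⟨g, hg, hga, rfl⟩
  set d : ℤ → ℤ := fun i => f i + g i with hddef
  have hdsupp : (Function.support d).Finite := by
    refine Set.Finite.subset (hf.union hg) ?_
    intro i hi
    by_contra hcon
    simp only [Set.mem_union, Function.mem_support, not_or, not_not] at hcon
    exact hi (by simp [hddef, hcon.1, hcon.2])
  have hdb : ∀ i, |d i| ≤ 2 * a := by
    intro i
    calc |d i| ≤ |f i| + |g i| := abs_add_le _ _
      _ ≤ 2 * a := by linarith [hfa i, hga i]
  have hval : (∑ᶠ i : ℤ, (f i : ℂ) * β ^ i) + (∑ᶠ i : ℤ, (g i : ℂ) * β ^ i)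
      = ∑ᶠ i : ℤ, (d i : ℂ) * β ^ i := by
    have h1 : (Function.support fun i => (f i : ℂ) * β ^ i).Finite := by
      refine Set.Finite.subset hf ?_
      intro i hi
      by_contra hcon
      simp only [Function.mem_support, not_not] at hcon
      exact hi (by simp [hcon])
    have h2 : (Function.support fun i => (g i : ℂ) * β ^ i).Finite := by
      refine Set.Finite.subset hg ?_
      intro i hi
      by_contra hcon
      simp only [Function.mem_support, not_not] at hcon
      exact hi (by simp [hcon])
    rw [← finsum_add_distrib h1 h2]
    refine finsum_congr fun i => ?_
    rw [hddef]
    push_cast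
    ring
  rw [hval]
  exact reduce β hβ h k b hroot B M hB hM hstrong a ha d hdsupp hdb
end

section
/- Let β be a complex number with |β| > 1 that is WRZ, i.e., β is a root of W(X) = ∑_{i=-h}^{k} b_i X^i with integer coefficients and b_0 > ∑_{i≠0} |b_i|. Set B = b_0, M = ∑_{i≠0}|b_i|, a = ⌈(B-1)/2⌉ + M, and A = {-a,…,a}. Then Fin_A(β) is closed under addition. -/
lemma key_reduce (β : ℂ) (hβ0 : β ≠ 0) (T : Finset ℤ) (R : ℤ → ℤ)
    (hRs : ∀ i, i ∉ T → R i = 0)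
    (B M c : ℤ) (hB : R 0 = B)
    (hM : ∑ i ∈ T.erase 0, |R i| = M)
    (hrel : ∑ i ∈ T, (R i : ℂ) * β ^ i = 0)
    (hBM : M < B) (hc : B ≤ 2 * c + 1) (h0c : 0 ≤ c) (h0M : 0 ≤ M) :
    ∀ n : ℕ, ∀ f : ℤ → ℤ, ∀ s : Finset ℤ, Function.support f ⊆ ↑s →
      (∑ m ∈ s, max (|f m| - c) 0 ≤ n) →
      ∃ g : ℤ → ℤ, (Function.support g).Finite ∧ (∀ i, |g i| ≤ c + M) ∧
        ∑ᶠ i : ℤ, (g i : ℂ) * β ^ i = ∑ᶠ i : ℤ, (f i : ℂ) * β ^ i := by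
  intro n
  induction n with
  | zero =>
    intro f s hsupp hsum
    refine ⟨f, Set.Finite.subset s.finite_toSet hsupp, fun i => ?_, rfl⟩
    by_cases hi : i ∈ s
    · have h1 : max (|f i| - c) 0 ≤ 0 := by
        refine le_trans (Finset.single_le_sum (f := fun m => max (|f m| - c) 0)
          (fun m _ => le_max_right _ _) hi) (by exact_mod_cast hsum)
      have := le_max_left (|f i| - c) 0
      linarith [le_trans this h1]
    · have : f i = 0 := by
        by_contra hne
        exact hi (hsupp hne)
      simp [this]; linarith
  | succ n ih =>
    intro f s hsupp hsum
    by_cases hgood : ∀ i, |f i| ≤ c + M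
    · exact ⟨f, Set.Finite.subset s.finite_toSet hsupp, hgood, rfl⟩
    push_neg at hgood
    obtain ⟨j, hj⟩ := hgood
    set ε : ℤ := if 0 ≤ f j then 1 else -1 with hε
    have hεf : ε * f j = |f j| := by
      rcases le_or_gt 0 (f j) with h1 | h1
      · simp [hε, h1, abs_of_nonneg h1]
      · simp [hε, not_le.2 h1, abs_of_neg h1]
    have hε1 : |ε| = 1 := by
      rcases le_or_gt 0 (f j) with h1 | h1
      · rw [hε, if_pos h1]; rfl
      · rw [hε, if_neg (not_le.2 h1)]; rfl
    set f' : ℤ → ℤ := fun m => f m - ε * R (m - j) with hf'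
    set s' : Finset ℤ := s ∪ T.image (· + j) with hs'
    have hss' : s ⊆ s' := Finset.subset_union_left
    have hsupp' : Function.support f' ⊆ ↑s' := by
      intro m hm
      simp only [Function.mem_support, hf'] at hm
      by_cases hfm : f m = 0
      · have hR : R (m - j) ≠ 0 := by
          intro h0; apply hm; rw [hfm, h0]; ring
        have hT : m - j ∈ T := by
          by_contra hT; exact hR (hRs _ hT)
        apply Finset.mem_coe.2
        refine Finset.mem_union_right _ (Finset.mem_image.2 ⟨m - j, hT, by ring⟩)
      · exact Finset.mem_coe.2 (hss' (hsupp hfm))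
    have hjs : j ∈ s := by
      apply hsupp
      intro h0
      rw [h0] at hj; simp at hj; linarith
    have hjs' : j ∈ s' := hss' hjs
    -- value preservation
    have hval : ∑ᶠ i : ℤ, ((f' i : ℂ)) * β ^ i = ∑ᶠ i : ℤ, (f i : ℂ) * β ^ i := by
      have h1 : Function.support (fun i : ℤ => (f' i : ℂ) * β ^ i) ⊆ ↑s' := by
        intro m hm
        apply hsupp'
        intro h0
        simp only [Function.mem_support] at hm
        apply hm; rw [h0]; simp
      have h2 : Function.support (fun i : ℤ => (f i : ℂ) * β ^ i) ⊆ ↑s' := by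
        intro m hm
        simp only [Function.mem_support] at hm
        have hfm : f m ≠ 0 := by intro h0; apply hm; rw [h0]; simp
        exact Finset.mem_coe.2 (hss' (hsupp hfm))
      rw [finsum_eq_sum_of_support_subset _ h1, finsum_eq_sum_of_support_subset _ h2]
      have hshift : ∑ m ∈ s', (R (m - j) : ℂ) * β ^ m = 0 := by
        have himg : T.image (· + j) ⊆ s' := Finset.subset_union_right
        rw [← Finset.sum_subset himg (by
          intro m hm hni
          have : m - j ∉ T := by
            intro hT; exact hni (Finset.mem_image.2 ⟨m - j, hT, by ring⟩)
          simp [hRs _ this])]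
        rw [Finset.sum_image (by intro x _ y _ hxy; simp only at hxy; omega)]
        have h7 : ∀ i ∈ T, (R (i + j - j) : ℂ) * β ^ (i + j) = ((R i : ℂ) * β ^ i) * β ^ j := by
          intro i _
          rw [show i + j - j = i by ring, zpow_add₀ hβ0]; ring
        rw [Finset.sum_congr rfl h7, ← Finset.sum_mul, hrel, zero_mul]
      calc ∑ m ∈ s', (f' m : ℂ) * β ^ m
          = ∑ m ∈ s', ((f m : ℂ) * β ^ m - (ε : ℂ) * ((R (m - j) : ℂ) * β ^ m)) := by
            refine Finset.sum_congr rfl fun m _ => ?_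
            simp only [hf']; push_cast; ring
        _ = ∑ m ∈ s', (f m : ℂ) * β ^ m - (ε : ℂ) * ∑ m ∈ s', (R (m - j) : ℂ) * β ^ m := by
            rw [Finset.sum_sub_distrib, Finset.mul_sum]
        _ = ∑ m ∈ s', (f m : ℂ) * β ^ m := by rw [hshift]; ring
    -- measure decrease
    have hEj : max (|f' j| - c) 0 + (M + 1) ≤ max (|f j| - c) 0 := by
      have hfjB : f' j = ε * (|f j| - B) := by
        have h2 : f' j = f j - ε * B := by
          show f j - ε * R (j - j) = f j - ε * B
          rw [sub_self, hB]
        rw [h2]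
        rcases le_or_gt 0 (f j) with h1 | h1
        · rw [abs_of_nonneg h1, hε, if_pos h1]; ring
        · rw [abs_of_neg h1, hε, if_neg (not_le.2 h1)]; ring
      have hfj' : |f' j| = |(|f j| - B)| := by
        rw [hfjB, abs_mul, hε1, one_mul]
      rw [hfj']
      set v := |f j| with hv
      have hv1 : c + M < v := hj
      rcases le_or_gt B v with h1 | h1
      · rw [abs_of_nonneg (by linarith)]
        rw [max_def, max_def]; split_ifs <;> linarith
      · rw [abs_of_neg (by linarith)]
        rw [max_def, max_def]; split_ifs <;> linarith
    have hEm : ∀ m ∈ s'.erase j, max (|f' m| - c) 0 ≤ max (|f m| - c) 0 + |R (m - j)| := by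
      intro m _
      have h1 : |f' m| ≤ |f m| + |R (m - j)| := by
        calc |f' m| ≤ |f m| + |ε * R (m - j)| := by
              simp only [hf']; exact abs_sub _ _
          _ = |f m| + |R (m - j)| := by rw [abs_mul, hε1, one_mul]
      rw [max_def, max_def]; split_ifs <;> linarith [abs_nonneg (R (m - j))]
    have hsumR : ∑ m ∈ s'.erase j, |R (m - j)| ≤ M := by
      set V : Finset ℤ := s'.erase j ∪ (T.erase 0).image (· + j) with hV
      have h1 : ∑ m ∈ s'.erase j, |R (m - j)| ≤ ∑ m ∈ V, |R (m - j)| :=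
        Finset.sum_le_sum_of_subset_of_nonneg Finset.subset_union_left
          (fun m _ _ => abs_nonneg _)
      have h2 : ∑ m ∈ V, |R (m - j)| = ∑ m ∈ (T.erase 0).image (· + j), |R (m - j)| := by
        refine (Finset.sum_subset Finset.subset_union_right ?_).symm
        intro m hm hni
        have hmj : m ≠ j := by
          rcases Finset.mem_union.1 hm with h3 | h3
          · exact Finset.ne_of_mem_erase h3
          · obtain ⟨i, hi, hij⟩ := Finset.mem_image.1 h3
            exfalso; exact hni h3
        have : m - j ∉ T := by
          intro hT
          apply hni
          refine Finset.mem_image.2 ⟨m - j, Finset.mem_erase.2 ⟨by omega, hT⟩, by ring⟩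
        simp [hRs _ this]
      have h3 : ∑ m ∈ (T.erase 0).image (· + j), |R (m - j)| = M := by
        rw [Finset.sum_image (by intro x _ y _ hxy; simp only at hxy; omega)]
        rw [← hM]
        refine Finset.sum_congr rfl fun i _ => by rw [show i + j - j = i by ring]
      linarith
    have hΦf : ∑ m ∈ s', max (|f m| - c) 0 ≤ (n : ℤ) + 1 := by
      have h6 : ∑ m ∈ s', max (|f m| - c) 0 = ∑ m ∈ s, max (|f m| - c) 0 := by
        refine (Finset.sum_subset hss' ?_).symm
        intro m _ hm
        have hz : f m = 0 := by by_contra hne; exact hm (hsupp hne)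
        rw [hz, abs_zero, zero_sub, max_eq_right (by linarith : -c ≤ (0:ℤ))]
      rw [h6]; exact_mod_cast hsum
    have hΦ' : ∑ m ∈ s', max (|f' m| - c) 0 ≤ (n : ℤ) := by
      have h4 : ∑ m ∈ s'.erase j, max (|f' m| - c) 0 ≤
          ∑ m ∈ s'.erase j, max (|f m| - c) 0 + ∑ m ∈ s'.erase j, |R (m - j)| := by
        rw [← Finset.sum_add_distrib]
        exact Finset.sum_le_sum hEm
      have hA := Finset.add_sum_erase s' (fun m => max (|f' m| - c) 0) hjs'
      have hBq := Finset.add_sum_erase s' (fun m => max (|f m| - c) 0) hjs'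
      linarith
    obtain ⟨g, hg1, hg2, hg3⟩ := ih f' s' hsupp' hΦ'
    exact ⟨g, hg1, hg2, hg3.trans hval⟩





theorem wrz_addition_closed (β : ℂ) (hβ : 1 < ‖β‖)
    (h k : ℕ) (b : ℤ → ℤ)
    (hroot : ∑ i ∈ Finset.Icc (-(h : ℤ)) (k : ℤ), (b i : ℂ) * β ^ i = 0)
    (B M : ℤ) (hB : B = b 0)
    (hM : M = ∑ i ∈ (Finset.Icc (-(h : ℤ)) (k : ℤ)).erase 0, |b i|)
    (hweak : B > M)
    (a : ℤ)
    (ha : a = ⌈((B : ℝ) - 1) / 2⌉ + M) :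
    ∀ x ∈ FinA β a, ∀ y ∈ FinA β a, x + y ∈ FinA β a := by
  have hβ0 : β ≠ 0 := by
    intro h0; rw [h0] at hβ; simp at hβ; linarith
  set T : Finset ℤ := Finset.Icc (-(h : ℤ)) (k : ℤ) with hT
  set R : ℤ → ℤ := fun i => if i ∈ T then b i else 0 with hR
  have h0T : (0 : ℤ) ∈ T := by
    rw [hT, Finset.mem_Icc]
    constructor <;> [exact neg_nonpos.2 (Int.natCast_nonneg h); exact Int.natCast_nonneg k]
  have hRs : ∀ i, i ∉ T → R i = 0 := fun i hi => by simp [hR, hi]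
  have hRB : R 0 = B := by rw [hR]; simp [h0T, hB]
  have hRM : ∑ i ∈ T.erase 0, |R i| = M := by
    rw [hM]
    refine Finset.sum_congr rfl fun i hi => ?_
    rw [hR]; simp [Finset.mem_of_mem_erase hi]
  have hrel : ∑ i ∈ T, (R i : ℂ) * β ^ i = 0 := by
    rw [← hroot]
    refine Finset.sum_congr rfl fun i hi => by rw [hR]; simp [hi]
  have h0M : 0 ≤ M := by
    rw [hM]; exact Finset.sum_nonneg fun i _ => abs_nonneg _
  set c : ℤ := ⌈((B : ℝ) - 1) / 2⌉ with hcdef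
  have hc : B ≤ 2 * c + 1 := by
    have h1 : ((B : ℝ) - 1) / 2 ≤ (c : ℝ) := Int.le_ceil _
    have h2 : (B : ℝ) ≤ 2 * (c : ℝ) + 1 := by linarith
    exact_mod_cast h2
  have h0c : 0 ≤ c := by
    apply Int.ceil_nonneg
    have : (1 : ℝ) ≤ (B : ℝ) := by exact_mod_cast (by linarith : (1 : ℤ) ≤ B)
    linarith
  have hacM : a = c + M := by rw [ha]
  rintro x ⟨f, hf, hfb, hfx⟩ y ⟨g, hg, hgb, hgy⟩
  set F : ℤ → ℤ := fun i => f i + g i with hF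
  have hFs : Function.support F ⊆ ↑(hf.toFinset ∪ hg.toFinset) := by
    intro m hm
    simp only [Function.mem_support, hF] at hm
    by_cases h1 : f m = 0
    · have h2 : g m ≠ 0 := fun h2 => hm (by rw [h1, h2]; ring)
      exact Finset.mem_coe.2 (Finset.mem_union_right _ (hg.mem_toFinset.2 h2))
    · exact Finset.mem_coe.2 (Finset.mem_union_left _ (hf.mem_toFinset.2 h1))
  set s : Finset ℤ := hf.toFinset ∪ hg.toFinset with hsdef
  have hxy : x + y = ∑ᶠ i : ℤ, (F i : ℂ) * β ^ i := by
    have h1 : Function.support (fun i : ℤ => (f i : ℂ) * β ^ i) ⊆ ↑s := by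
      intro m hm
      simp only [Function.mem_support] at hm
      have : f m ≠ 0 := fun h0 => hm (by rw [h0]; simp)
      exact Finset.mem_coe.2 (Finset.mem_union_left _ (hf.mem_toFinset.2 this))
    have h2 : Function.support (fun i : ℤ => (g i : ℂ) * β ^ i) ⊆ ↑s := by
      intro m hm
      simp only [Function.mem_support] at hm
      have : g m ≠ 0 := fun h0 => hm (by rw [h0]; simp)
      exact Finset.mem_coe.2 (Finset.mem_union_right _ (hg.mem_toFinset.2 this))
    have h3 : Function.support (fun i : ℤ => (F i : ℂ) * β ^ i) ⊆ ↑s := by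
      intro m hm
      simp only [Function.mem_support] at hm
      have : F m ≠ 0 := fun h0 => hm (by rw [h0]; simp)
      exact hFs this
    rw [hfx, hgy, finsum_eq_sum_of_support_subset _ h1, finsum_eq_sum_of_support_subset _ h2,
      finsum_eq_sum_of_support_subset _ h3, ← Finset.sum_add_distrib]
    refine Finset.sum_congr rfl fun m _ => ?_
    simp only [hF]; push_cast; ring
  obtain ⟨G, hG1, hG2, hG3⟩ := key_reduce β hβ0 T R hRs B M c hRB hRM hrel
    (by rw [hB, hM] at hweak; omega) hc h0c h0M
    (∑ m ∈ s, max (|F m| - c) 0).toNat F s hFs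
    (by
      have : (0 : ℤ) ≤ ∑ m ∈ s, max (|F m| - c) 0 :=
        Finset.sum_nonneg fun m _ => le_max_right _ _
      exact Int.self_le_toNat _)
  exact ⟨G, hG1, fun i => by rw [hacM]; exact hG2 i, by rw [hxy, hG3]⟩
end

section
/- Let B > M ≥ 1 be integers, a = ⌈(B-1)/2⌉ + M, a' = ⌈(B-1)/2⌉, s = ⌈a/(B-M)⌉. For each 1 ≤ ℓ < s: if |z| ≤ 2a - (ℓ-1)(B-M) and q = 0 when |z| ≤ a', q = sgn(z) otherwise, then for any integer F with |F| ≤ M one has |z - qB - F| ≤ 2a - ℓ(B-M); and for ℓ = s, |z - qB - F| ≤ a. -/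
theorem algII_digit_invariant (B M : ℤ) (hM : 1 ≤ M) (hB : M < B)
    (a a' s : ℤ)
    (ha' : a' = ⌈((B : ℝ) - 1) / 2⌉)
    (ha : a = a' + M)
    (hs : s = ⌈(a : ℝ) / ((B : ℝ) - M)⌉)
    (z q F : ℤ)
    (hq : q = if |z| ≤ a' then 0 else Int.sign z)
    (hF : |F| ≤ M) :
    (∀ ℓ : ℤ, 1 ≤ ℓ → ℓ < s → |z| ≤ 2 * a - (ℓ - 1) * (B - M) →
      |z - q * B - F| ≤ 2 * a - ℓ * (B - M)) ∧
    (|z| ≤ 2 * a - (s - 1) * (B - M) → |z - q * B - F| ≤ a) := by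
  have hBM : (0:ℤ) < B - M := by omega
  have hBMr : (0:ℝ) < (B:ℝ) - M := by exact_mod_cast hBM
  -- a ≤ s * (B - M)
  have hs1 : a ≤ s * (B - M) := by
    have h := Int.le_ceil ((a:ℝ) / ((B:ℝ) - M))
    rw [div_le_iff₀ hBMr] at h
    rw [← hs] at h
    have : (a:ℝ) ≤ ((s * (B - M) : ℤ) : ℝ) := by push_cast; linarith
    exact_mod_cast this
  -- (s - 1) * (B - M) < a
  have hs2 : (s - 1) * (B - M) < a := by
    have h := Int.ceil_lt_add_one ((a:ℝ) / ((B:ℝ) - M))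
    rw [← hs] at h
    have hx : (s:ℝ) - 1 < (a:ℝ) / ((B:ℝ) - M) := by linarith
    have h2 : ((s:ℝ) - 1) * ((B:ℝ) - M) < a := (lt_div_iff₀ hBMr).mp hx
    have : (((s - 1) * (B - M) : ℤ) : ℝ) < (a:ℝ) := by push_cast; linarith
    exact_mod_cast this
  -- B - 1 ≤ 2 * a' and 2 * a' ≤ B
  have ha'1 : B - 1 ≤ 2 * a' := by
    have h := Int.le_ceil (((B:ℝ) - 1) / 2)
    rw [← ha'] at h
    have : ((B:ℝ) - 1) ≤ 2 * a' := by linarith [(div_le_iff₀ (by norm_num : (0:ℝ) < 2)).mp h]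
    have : ((B - 1 : ℤ) : ℝ) ≤ ((2 * a' : ℤ) : ℝ) := by push_cast; linarith
    exact_mod_cast this
  have ha'2 : 2 * a' ≤ B := by
    have h := Int.ceil_lt_add_one (((B:ℝ) - 1) / 2)
    rw [← ha'] at h
    have : ((2 * a' : ℤ) : ℝ) < ((B + 1 : ℤ) : ℝ) := by push_cast; nlinarith
    have h4 : (2 * a' : ℤ) < B + 1 := by exact_mod_cast this
    omega
  -- core lemma
  have core : ∀ C : ℤ, a ≤ C → |z| ≤ C + (B - M) → |z - q * B - F| ≤ C := by
    intro C hC1 hC2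
    obtain ⟨hF1, hF2⟩ := abs_le.mp hF
    obtain ⟨hz1, hz2⟩ := abs_le.mp hC2
    rw [abs_le]
    by_cases hz : |z| ≤ a'
    · rw [if_pos hz] at hq
      obtain ⟨h1, h2⟩ := abs_le.mp hz
      subst hq; constructor <;> omega
    · rw [if_neg hz] at hq
      have hz' := lt_abs.mp (lt_of_not_ge hz)
      rcases hz' with h | h
      · have hpos : 0 < z := by omega
        rw [Int.sign_eq_one_of_pos hpos] at hq
        subst hq; constructor <;> omega
      · have hneg : z < 0 := by omega
        rw [Int.sign_eq_neg_one_of_neg hneg] at hq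
        subst hq; constructor <;> omega
  constructor
  · intro ℓ h1 h2 h3
    have hle : ℓ * (B - M) ≤ (s - 1) * (B - M) :=
      mul_le_mul_of_nonneg_right (by omega) (le_of_lt hBM)
    have heq : (ℓ - 1) * (B - M) = ℓ * (B - M) - (B - M) := by ring
    rw [heq] at h3
    exact core _ (by omega) (by omega)
  · intro h3
    have heq : (s - 1) * (B - M) = s * (B - M) - (B - M) := by ring
    rw [heq] at h3
    exact core _ le_rfl (by omega)
end

section
/- Let α be an algebraic number of degree d over ℚ whose conjugates α₁,…,α_d all satisfy |α_i| ≠ 1, and assume |α| > 1. Then for every real t ≥ 1 there exists a nonzero polynomial Q(X) = a₀X^m + a₁X^{m-1} + ⋯ + a_m with integer coefficients and an index i₀ ∈ {1,…,m} such that Q(α) = 0 and |a_{i₀}| > t·∑_{i ∈ {0,…,m}\{i₀}} |a_i|. -/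
open Polynomial

lemma coeff_comp_neg_X {R : Type*} [CommRing R] (p : R[X]) (n : ℕ) :
    (p.comp (-X)).coeff n = (-1) ^ n * p.coeff n := by
  induction p using Polynomial.induction_on' with
  | add p q hp hq => simp [add_comp, hp, hq, mul_add]
  | monomial m a =>
      simp only [monomial_comp]
      rw [neg_pow, ← C_1, ← C_neg, ← C_pow]
      simp only [coeff_C_mul, coeff_monomial]
      rw [coeff_X_pow]
      split <;> split <;> simp_all [mul_comm] <;> omega

/-- Graeffe step: S(X) * S(-X) is even. -/
lemma exists_graeffe (S : Polynomial ℤ) :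
    ∃ T : Polynomial ℤ, expand ℤ 2 T = S * S.comp (-X) := by
  set U := S * S.comp (-X) with hU
  have hUeven : ∀ n, ¬ 2 ∣ n → U.coeff n = 0 := by
    intro n hn
    have h1 : U.comp (-X) = U := by
      rw [hU, mul_comp, comp_neg_X_comp_neg_X, mul_comm]
    have h2 := coeff_comp_neg_X U n
    rw [h1] at h2
    have : (-1 : ℤ) ^ n = -1 := Odd.neg_one_pow (Nat.odd_iff.mpr (by omega))
    rw [this] at h2
    linarith
  refine ⟨∑ i ∈ Finset.range (U.natDegree + 1), C (U.coeff (2 * i)) * X ^ i, ?_⟩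
  ext n
  rw [coeff_expand (by norm_num)]
  have hcoeff : ∀ k, (∑ i ∈ Finset.range (U.natDegree + 1), C (U.coeff (2 * i)) * X ^ i).coeff k
      = if k ≤ U.natDegree then U.coeff (2 * k) else 0 := by
    intro k
    rw [finset_sum_coeff]
    simp only [coeff_C_mul, coeff_X_pow, mul_ite, mul_one, mul_zero]
    rw [Finset.sum_ite_eq (Finset.range (U.natDegree + 1)) k]
    simp [Finset.mem_range, Nat.lt_succ_iff]
  split
  · next h =>
    rw [hcoeff]
    obtain ⟨k, rfl⟩ := h
    rw [Nat.mul_div_cancel_left _ (by norm_num)]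
    split
    · rfl
    · next h2 =>
      rw [eq_comm]
      apply coeff_eq_zero_of_natDegree_lt
      omega
  · next h => exact (hUeven n h).symm

lemma map_comp_neg_X_factored (m : Multiset ℂ) (c : ℂ) :
    (C c * (m.map fun z => X - C z).prod).comp (-X)
      = C (c * (-1) ^ Multiset.card m) * (m.map fun z => X + C z).prod := by
  have h : ∀ p q : ℂ[X], (p * q).comp (-X) = p.comp (-X) * q.comp (-X) := fun p q => mul_comp ..
  rw [mul_comp, C_comp]
  have : ((m.map fun z => X - C z).prod).comp (-X) = (m.map fun z => (X - C z).comp (-X)).prod := by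
    have hae : ∀ p : ℂ[X], p.comp (-X) = Polynomial.aeval (-X : ℂ[X]) p := by
      intro p; rw [aeval_def, Polynomial.algebraMap_eq]; rfl
    rw [hae, map_multiset_prod, Multiset.map_map]
    exact congrArg _ (Multiset.map_congr rfl fun z _ => (hae _).symm)
  rw [this]
  have h2 : (m.map fun z => (X - C z).comp (-X)) = m.map fun z => (-1) * (X + C z) := by
    apply Multiset.map_congr rfl
    intro z _
    simp [sub_comp, neg_add, neg_mul, one_mul]
    ring
  rw [h2]
  have h3 : (m.map fun z => (-1 : ℂ[X]) * (X + C z)).prod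
      = (m.map fun _ => (-1 : ℂ[X])).prod * (m.map fun z => X + C z).prod :=
    Multiset.prod_map_mul
  rw [h3, Multiset.map_const', Multiset.prod_replicate]
  rw [map_mul, map_pow, map_neg, map_one]
  ring

lemma graeffe_step (m : Multiset ℂ) (S T : ℤ[X]) (c : ℂ) (hc : c ≠ 0) (f : ℂ → ℂ)
    (hS : S.map (Int.castRingHom ℂ) = C c * (m.map fun z => X - C (f z)).prod)
    (hT : expand ℤ 2 T = S * S.comp (-X)) :
    ∃ c' : ℂ, c' ≠ 0 ∧
      T.map (Int.castRingHom ℂ) = C c' * (m.map fun z => X - C (f z ^ 2)).prod := by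
  set d := Multiset.card m
  refine ⟨c * (c * (-1) ^ d), by simp [hc], ?_⟩
  apply expand_injective (n := 2) (by norm_num)
  have h1 : expand ℂ 2 (T.map (Int.castRingHom ℂ)) = (expand ℤ 2 T).map (Int.castRingHom ℂ) := by
    rw [map_expand]
  have hSm : S.map (Int.castRingHom ℂ) = C c * ((m.map f).map fun z => X - C z).prod := by
    rw [hS, Multiset.map_map]; rfl
  rw [h1, hT, Polynomial.map_mul, map_comp (Int.castRingHom ℂ), hSm, Polynomial.map_neg,
    Polynomial.map_X]
  rw [map_comp_neg_X_factored (m.map f) c]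
  have hcomb : (C c * ((m.map f).map fun z => X - C z).prod)
        * (C (c * (-1) ^ Multiset.card (m.map f)) * ((m.map f).map fun z => X + C z).prod)
      = C (c * (c * (-1) ^ d)) * ((m.map f).map fun z => (X - C z) * (X + C z)).prod := by
    simp only [Multiset.prod_map_mul, Multiset.card_map, map_mul]
    ring
  rw [hcomb]
  have h2 : ∀ z : ℂ, (X - C z) * (X + C z) = expand ℂ 2 (X - C (z ^ 2)) := by
    intro z
    rw [map_sub, expand_X, expand_C, C_pow]
    ring
  have h3 : ((m.map f).map fun z => (X - C z) * (X + C z)).prod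
      = expand ℂ 2 ((m.map fun z => X - C (f z ^ 2)).prod) := by
    rw [map_multiset_prod (expand ℂ 2), Multiset.map_map, Multiset.map_map]
    exact congrArg _ (Multiset.map_congr rfl fun z _ => h2 (f z))
  rw [h3, map_mul (expand ℂ 2), expand_C]

lemma graeffe_iterate (m : Multiset ℂ) (P0 : ℤ[X]) (c0 : ℂ) (hc0 : c0 ≠ 0)
    (h0 : P0.map (Int.castRingHom ℂ) = C c0 * (m.map fun z => X - C z).prod) (k : ℕ) :
    ∃ (P : ℤ[X]) (c : ℂ), c ≠ 0 ∧
      P.map (Int.castRingHom ℂ) = C c * (m.map fun z => X - C (z ^ 2 ^ k)).prod := by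
  induction k with
  | zero =>
      refine ⟨P0, c0, hc0, ?_⟩
      rw [h0]
      congr 1
      exact congrArg Multiset.prod
        (Multiset.map_congr rfl fun z _ => by rw [pow_zero, pow_one])
  | succ k ih =>
      obtain ⟨P, c, hc, hP⟩ := ih
      obtain ⟨T, hT⟩ := exists_graeffe P
      obtain ⟨c', hc', hT'⟩ := graeffe_step m P T c hc (fun z => z ^ 2 ^ k) hP hT
      refine ⟨T, c', hc', ?_⟩
      rw [hT']
      congr 1
      exact congrArg Multiset.prod
        (Multiset.map_congr rfl fun z _ => by rw [← pow_mul, ← pow_succ])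

lemma mprod_nonneg {s : Multiset ℝ} (h0 : ∀ x ∈ s, 0 ≤ x) : 0 ≤ s.prod := by
  induction s using Multiset.induction_on with
  | empty => simp
  | cons a s ih =>
      rw [Multiset.prod_cons]
      exact mul_nonneg (h0 a (Multiset.mem_cons_self a s))
        (ih fun x hx => h0 x (Multiset.mem_cons_of_mem hx))

lemma mprod_one_le {s : Multiset ℝ} (h1 : ∀ x ∈ s, 1 ≤ x) : 1 ≤ s.prod := by
  induction s using Multiset.induction_on with
  | empty => simp
  | cons a s ih =>
      rw [Multiset.prod_cons]
      have ha := h1 a (Multiset.mem_cons_self a s)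
      have hs := ih fun x hx => h1 x (Multiset.mem_cons_of_mem hx)
      nlinarith

lemma mprod_le_one {s : Multiset ℝ} (h0 : ∀ x ∈ s, 0 ≤ x) (h1 : ∀ x ∈ s, x ≤ 1) :
    s.prod ≤ 1 := by
  induction s using Multiset.induction_on with
  | empty => simp
  | cons a s ih =>
      rw [Multiset.prod_cons]
      have hs0 : (0:ℝ) ≤ s.prod := mprod_nonneg fun x hx => h0 x (Multiset.mem_cons_of_mem hx)
      have hs1 : s.prod ≤ 1 := ih (fun x hx => h0 x (Multiset.mem_cons_of_mem hx))
        (fun x hx => h1 x (Multiset.mem_cons_of_mem hx))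
      calc a * s.prod ≤ 1 * 1 := by
            apply mul_le_mul (h1 a (Multiset.mem_cons_self a s)) hs1 hs0 zero_le_one
        _ = 1 := by ring

lemma mprod_le_mprod_of_le {s t : Multiset ℝ} (h : t ≤ s) (h1 : ∀ x ∈ s, 1 ≤ x) :
    t.prod ≤ s.prod := by
  obtain ⟨u, rfl⟩ := Multiset.le_iff_exists_add.mp h
  rw [Multiset.prod_add]
  have ht : (0:ℝ) ≤ t.prod :=
    mprod_nonneg fun x hx => le_trans zero_le_one (h1 x (Multiset.mem_add.mpr (Or.inl hx)))
  have hu : (1:ℝ) ≤ u.prod :=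
    mprod_one_le fun x hx => h1 x (Multiset.mem_add.mpr (Or.inr hx))
  nlinarith

noncomputable def Complex.abs : AbsoluteValue ℂ ℝ := NormedField.toAbsoluteValue ℂ

lemma Complex.abs_apply' (z : ℂ) : Complex.abs z = ‖z‖ := rfl

lemma Complex.abs_intCast (n : ℤ) : Complex.abs (n : ℂ) = |(n : ℝ)| := by
  rw [Complex.abs_apply', Complex.norm_intCast]

lemma key_bound (m : Multiset ℂ) (ρ : ℝ)
    (hne1 : ∀ z ∈ m, Complex.abs z ≠ 1)
    (hsmall : ∀ z ∈ m, Complex.abs z < 1 → Complex.abs z ≤ ρ)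
    (hbig : ∀ z ∈ m, 1 < Complex.abs z → (Complex.abs z)⁻¹ ≤ ρ)
    (T : Multiset ℂ) (hT : T ≤ m) (hTne : T ≠ m.filter (fun z => 1 < Complex.abs z)) :
    (T.map Complex.abs).prod
      ≤ ((m.filter fun z => 1 < Complex.abs z).map Complex.abs).prod * ρ := by
  classical
  set bigs := m.filter (fun z => 1 < Complex.abs z) with hbigs
  set B := (bigs.map Complex.abs).prod with hB
  have hbigs_ge : ∀ x ∈ bigs.map Complex.abs, (1:ℝ) ≤ x := by
    intro x hx
    obtain ⟨z, hz, rfl⟩ := Multiset.mem_map.mp hx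
    exact le_of_lt (Multiset.mem_filter.mp hz).2
  have hB0 : (0:ℝ) ≤ B := mprod_nonneg fun x hx => le_trans zero_le_one (hbigs_ge x hx)
  set Tb := T.filter (fun z => 1 < Complex.abs z) with hTb
  set Ts := T.filter (fun z => ¬ 1 < Complex.abs z) with hTs
  have hsplit : Tb + Ts = T := Multiset.filter_add_not _ T
  have hTbB : Tb ≤ bigs := Multiset.filter_le_filter _ hT
  have hTbprod : ((Tb.map Complex.abs).prod : ℝ) ≤ B :=
    mprod_le_mprod_of_le (Multiset.map_le_map hTbB) hbigs_ge
  have hTb0 : (0:ℝ) ≤ (Tb.map Complex.abs).prod :=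
    mprod_nonneg (by
      intro x hx; obtain ⟨z, _, rfl⟩ := Multiset.mem_map.mp hx; exact AbsoluteValue.nonneg _ _)
  have hprodsplit : (T.map Complex.abs).prod
      = (Tb.map Complex.abs).prod * (Ts.map Complex.abs).prod := by
    rw [← hsplit, Multiset.map_add, Multiset.prod_add]
  by_cases hTs0 : Ts = 0
  · -- T = Tb ≤ bigs, strict
    have hTeq : T = Tb := by rw [← hsplit, hTs0, add_zero]
    have hTlt : Tb ≠ bigs := by rw [← hTeq]; exact hTne
    obtain ⟨u, hu⟩ := Multiset.le_iff_exists_add.mp hTbB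
    have hu0 : u ≠ 0 := by
      intro h; rw [h, add_zero] at hu; exact hTlt hu.symm
    obtain ⟨w, hw⟩ := Multiset.exists_mem_of_ne_zero hu0
    have hwbig : 1 < Complex.abs w := by
      have : w ∈ bigs := by rw [hu]; exact Multiset.mem_add.mpr (Or.inr hw)
      exact (Multiset.mem_filter.mp this).2
    have hwm : w ∈ m := by
      have : w ∈ bigs := by rw [hu]; exact Multiset.mem_add.mpr (Or.inr hw)
      exact Multiset.mem_of_le (Multiset.filter_le _ _) this
    have hwρ : (Complex.abs w)⁻¹ ≤ ρ := hbig w hwm hwbig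
    -- (Tb + {w}).prod ≤ B
    have h1 : (Tb.map Complex.abs).prod * Complex.abs w ≤ B := by
      have : Tb + {w} ≤ bigs := by
        rw [hu]
        apply add_le_add_right
        exact Multiset.singleton_le.mpr hw
      have h2 := mprod_le_mprod_of_le (Multiset.map_le_map this) hbigs_ge
      rw [Multiset.map_add, Multiset.prod_add] at h2
      simpa using h2
    have hw0 : (0:ℝ) < Complex.abs w := lt_trans zero_lt_one hwbig
    rw [hprodsplit, hTs0]
    simp only [Multiset.map_zero, Multiset.prod_zero, mul_one]
    calc (Tb.map Complex.abs).prod ≤ B * (Complex.abs w)⁻¹ := by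
          rw [le_mul_inv_iff₀ hw0]; exact h1
      _ ≤ B * ρ := by exact mul_le_mul_of_nonneg_left hwρ hB0
  · obtain ⟨w, hw⟩ := Multiset.exists_mem_of_ne_zero hTs0
    have hwm : w ∈ m := Multiset.mem_of_le hT (Multiset.mem_of_le (Multiset.filter_le _ _) hw)
    have hwsmall : Complex.abs w < 1 :=
      lt_of_le_of_ne (not_lt.mp (Multiset.mem_filter.mp hw).2) (hne1 w hwm)
    have hsmalls : ∀ x ∈ Ts.map Complex.abs, 0 ≤ x ∧ x ≤ 1 := by
      intro x hx
      obtain ⟨z, hz, rfl⟩ := Multiset.mem_map.mp hx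
      have hzm : z ∈ m := Multiset.mem_of_le hT (Multiset.mem_of_le (Multiset.filter_le _ _) hz)
      exact ⟨AbsoluteValue.nonneg _ _,
        le_of_lt (lt_of_le_of_ne (not_lt.mp (Multiset.mem_filter.mp hz).2) (hne1 z hzm))⟩
    have hTsρ : (Ts.map Complex.abs).prod ≤ ρ := by
      obtain ⟨rest, hrest⟩ := Multiset.exists_cons_of_mem
        (Multiset.mem_map_of_mem Complex.abs hw)
      rw [hrest, Multiset.prod_cons]
      have hrest_le : rest ≤ Ts.map Complex.abs := by rw [hrest]; exact Multiset.le_cons_self _ _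
      have h01 : ∀ x ∈ rest, 0 ≤ x ∧ x ≤ 1 := fun x hx =>
        hsmalls x (Multiset.mem_of_le hrest_le hx)
      have hr1 : rest.prod ≤ 1 := mprod_le_one (fun x hx => (h01 x hx).1) (fun x hx => (h01 x hx).2)
      have hr0 : 0 ≤ rest.prod := mprod_nonneg (fun x hx => (h01 x hx).1)
      have := hsmall w hwm hwsmall
      nlinarith [AbsoluteValue.nonneg Complex.abs w]
    have hTs0' : (0:ℝ) ≤ (Ts.map Complex.abs).prod :=
      mprod_nonneg fun x hx => (hsmalls x hx).1
    rw [hprodsplit]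
    exact mul_le_mul hTbprod hTsρ hTs0' hB0

lemma mabs_sum (s : Multiset ℂ) : Complex.abs s.sum ≤ (s.map Complex.abs).sum := by
  induction s using Multiset.induction_on with
  | empty => simp
  | cons a s ih =>
      rw [Multiset.sum_cons, Multiset.map_cons, Multiset.sum_cons]
      exact le_trans (AbsoluteValue.add_le _ _ _) (by linarith)

lemma abv_subset_prod_pow (T : Multiset ℂ) (N : ℕ) :
    Complex.abs ((T.map fun z => z ^ N).prod) = ((T.map Complex.abs).prod) ^ N := by
  rw [Multiset.prod_map_pow, map_pow, map_multiset_prod]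
  rw [Multiset.map_id']

lemma abv_esymm_le (m : Multiset ℂ) (ρ : ℝ) (hρ0 : 0 ≤ ρ)
    (hne1 : ∀ z ∈ m, Complex.abs z ≠ 1)
    (hsmall : ∀ z ∈ m, Complex.abs z < 1 → Complex.abs z ≤ ρ)
    (hbig : ∀ z ∈ m, 1 < Complex.abs z → (Complex.abs z)⁻¹ ≤ ρ)
    (N j : ℕ) (hj : j ≠ Multiset.card (m.filter fun z => 1 < Complex.abs z)) :
    Complex.abs ((m.map fun z => z ^ N).esymm j)
      ≤ ((Multiset.card m).choose j : ℝ) *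
        (((m.filter fun z => 1 < Complex.abs z).map Complex.abs).prod * ρ) ^ N := by
  classical
  set B := ((m.filter fun z => 1 < Complex.abs z).map Complex.abs).prod with hB
  rw [Multiset.esymm, Multiset.powersetCard_map, Multiset.map_map]
  refine le_trans (mabs_sum _) ?_
  rw [Multiset.map_map]
  refine le_trans (Multiset.sum_le_card_nsmul _ ((B * ρ) ^ N) ?_) ?_
  · intro x hx
    obtain ⟨T, hT, rfl⟩ := Multiset.mem_map.mp hx
    obtain ⟨hTm, hTcard⟩ := Multiset.mem_powersetCard.mp hT
    have hTne : T ≠ m.filter fun z => 1 < Complex.abs z := by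
      intro h; apply hj; rw [← hTcard, h]
    simp only [Function.comp_apply]
    rw [abv_subset_prod_pow]
    apply pow_le_pow_left₀ ?_ (key_bound m ρ hne1 hsmall hbig T hTm hTne)
    exact mprod_nonneg (by
      intro y hy; obtain ⟨z, _, rfl⟩ := Multiset.mem_map.mp hy; exact AbsoluteValue.nonneg _ _)
  · rw [Multiset.card_map, Multiset.card_powersetCard, nsmul_eq_mul]

lemma abv_esymm_main (m : Multiset ℂ) (hnodup : m.Nodup) (ρ : ℝ) (hρ0 : 0 ≤ ρ)
    (hne1 : ∀ z ∈ m, Complex.abs z ≠ 1)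
    (hsmall : ∀ z ∈ m, Complex.abs z < 1 → Complex.abs z ≤ ρ)
    (hbig : ∀ z ∈ m, 1 < Complex.abs z → (Complex.abs z)⁻¹ ≤ ρ)
    (N : ℕ) :
    (((m.filter fun z => 1 < Complex.abs z).map Complex.abs).prod) ^ N
      - ((Multiset.card m).choose (Multiset.card (m.filter fun z => 1 < Complex.abs z)) : ℝ) *
        ((((m.filter fun z => 1 < Complex.abs z).map Complex.abs).prod) * ρ) ^ N
      ≤ Complex.abs ((m.map fun z => z ^ N).esymm
          (Multiset.card (m.filter fun z => 1 < Complex.abs z))) := by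
  classical
  set bigs := m.filter (fun z => 1 < Complex.abs z) with hbigs
  set B := (bigs.map Complex.abs).prod with hB
  set r := Multiset.card bigs with hr
  set g : Multiset ℂ → ℂ := fun T => (T.map fun z => z ^ N).prod with hg
  have hmem : bigs ∈ m.powersetCard r := Multiset.mem_powersetCard.mpr ⟨Multiset.filter_le _ _, rfl⟩
  have hesymm : (m.map fun z => z ^ N).esymm r = ((m.powersetCard r).map g).sum := by
    rw [Multiset.esymm, Multiset.powersetCard_map, Multiset.map_map]
    rfl
  have hsplit : m.powersetCard r = bigs ::ₘ (m.powersetCard r).erase bigs :=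
    (Multiset.cons_erase hmem).symm
  set rest := (m.powersetCard r).erase bigs with hrest
  have hsum : ((m.powersetCard r).map g).sum = g bigs + (rest.map g).sum := by
    rw [hsplit, Multiset.map_cons, Multiset.sum_cons]
  have hnodupP : (m.powersetCard r).Nodup := hnodup.powersetCard
  have habsmain : Complex.abs (g bigs) = B ^ N := by
    rw [hg, abv_subset_prod_pow]
  -- bound the rest
  have hrest_bound : Complex.abs ((rest.map g).sum) ≤ ((Multiset.card m).choose r : ℝ) * (B * ρ) ^ N := by
    refine le_trans (mabs_sum _) ?_
    rw [Multiset.map_map]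
    refine le_trans (Multiset.sum_le_card_nsmul _ ((B * ρ) ^ N) ?_) ?_
    · intro x hx
      obtain ⟨T, hT, rfl⟩ := Multiset.mem_map.mp hx
      have hTP : T ∈ m.powersetCard r := Multiset.mem_of_le (Multiset.erase_le _ _) hT
      obtain ⟨hTm, hTcard⟩ := Multiset.mem_powersetCard.mp hTP
      have hTne : T ≠ bigs := (hnodupP.mem_erase_iff.mp hT).1
      simp only [Function.comp_apply, hg]
      rw [abv_subset_prod_pow]
      apply pow_le_pow_left₀ ?_ (key_bound m ρ hne1 hsmall hbig T hTm hTne)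
      exact mprod_nonneg (by
        intro y hy; obtain ⟨z, _, rfl⟩ := Multiset.mem_map.mp hy; exact AbsoluteValue.nonneg _ _)
    · rw [nsmul_eq_mul]
      have hcard : (Multiset.card (rest.map (Complex.abs ∘ g)) : ℝ) ≤ ((Multiset.card m).choose r : ℝ) := by
        rw [Multiset.card_map]
        have := Multiset.card_le_card (Multiset.erase_le bigs (m.powersetCard r))
        rw [Multiset.card_powersetCard] at this
        exact_mod_cast this
      apply mul_le_mul_of_nonneg_right hcard
      have hB0 : (0:ℝ) ≤ B := mprod_nonneg (by
        intro y hy; obtain ⟨z, _, rfl⟩ := Multiset.mem_map.mp hy; exact AbsoluteValue.nonneg _ _)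
      exact pow_nonneg (mul_nonneg hB0 hρ0) N
  have htri : Complex.abs (g bigs) ≤ Complex.abs (g bigs + (rest.map g).sum)
      + Complex.abs ((rest.map g).sum) := by
    have h := Complex.abs.add_le (g bigs + (rest.map g).sum) (-(rest.map g).sum)
    simp only [add_neg_cancel_right, map_neg, AbsoluteValue.map_neg] at h
    exact h
  rw [hesymm, hsum]
  rw [habsmain] at htri
  linarith

lemma numeric_aux (t dd w x cabs bn : ℝ) (ht : 1 ≤ t) (hd : 1 ≤ dd) (hw : 1 ≤ w)
    (hx : 0 ≤ x) (hcabs : 0 < cabs) (hbn : 0 < bn)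
    (hk : (t + 1) * ((dd + 1) * w) * x < 1) :
    t * (dd * (cabs * (w * (bn * x)))) < cabs * (bn * (1 - w * x)) := by
  have hwx : 0 ≤ w * x := by nlinarith
  have key : t * (dd * (w * x)) + w * x < 1 := by nlinarith
  have hcb : 0 < cabs * bn := mul_pos hcabs hbn
  nlinarith [mul_lt_mul_of_pos_left key hcb]

theorem exists_dominant_polynomial (α : ℂ) (halg : IsAlgebraic ℚ α)
    (hconj : ∀ γ : ℂ, aeval γ (minpoly ℚ α) = 0 → ‖γ‖ ≠ 1)
    (hα : 1 < ‖α‖) (t : ℝ) (ht : 1 ≤ t) :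
    ∃ Q : ℤ[X], Q ≠ 0 ∧ aeval α Q = 0 ∧
      ∃ e : ℕ, e < Q.natDegree ∧
        (|Q.coeff e| : ℝ) >
          t * ∑ i ∈ (Finset.range (Q.natDegree + 1)).erase e, (|Q.coeff i| : ℝ) := by
  classical
  set q := minpoly ℚ α with hqdef
  have hint : IsIntegral ℚ α := halg.isIntegral
  have hq0 : q ≠ 0 := minpoly.ne_zero hint
  have hqmonic : q.Monic := minpoly.monic hint
  set m := q.aroots ℂ with hmdef
  -- basic facts about m
  have hqmap0 : q.map (algebraMap ℚ ℂ) ≠ 0 := by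
    simpa using (Polynomial.map_ne_zero_iff (algebraMap ℚ ℂ).injective).mpr hq0
  have hmsplit : q.map (algebraMap ℚ ℂ) = (m.map fun z => X - C z).prod := by
    have h1 : (q.map (algebraMap ℚ ℂ)).Monic := hqmonic.map _
    have h2 : (q.map (algebraMap ℚ ℂ)).Splits := IsAlgClosed.splits _
    exact h2.eq_prod_roots_of_monic h1
  have haroots : ∀ z ∈ m, aeval z q = 0 := by
    intro z hz
    rw [hmdef, Polynomial.mem_aroots] at hz
    exact hz.2
  have hne1 : ∀ z ∈ m, Complex.abs z ≠ 1 := fun z hz => hconj z (haroots z hz)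
  have hαm : α ∈ m := by
    rw [hmdef, Polynomial.mem_aroots]
    exact ⟨hq0, minpoly.aeval ℚ α⟩
  have hnodup : m.Nodup := by
    apply Polynomial.nodup_roots
    exact ((minpoly.irreducible hint).separable).map
  -- integer polynomial P0
  obtain ⟨b, hb⟩ := IsLocalization.integerNormalization_map_to_map (nonZeroDivisors ℤ)
    (q : Polynomial ℚ)
  set P0 : Polynomial ℤ := IsLocalization.integerNormalization (nonZeroDivisors ℤ) q with hP0
  have hbne : ((b : ℤ) : ℂ) ≠ 0 := by
    have := nonZeroDivisors.coe_ne_zero b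
    exact_mod_cast this
  have hbase : P0.map (Int.castRingHom ℂ) = C ((b : ℤ) : ℂ) * (m.map fun z => X - C z).prod := by
    have h1 : (Int.castRingHom ℂ) = (algebraMap ℚ ℂ).comp (algebraMap ℤ ℚ) := by
      ext n; simp
    rw [h1, ← Polynomial.map_map, hb]
    have h2 : ((b : ℤ) • q) = C ((b : ℤ) : ℚ) * q := by
      rw [zsmul_eq_mul, ← Polynomial.C_eq_intCast]
    rw [h2, Polynomial.map_mul, Polynomial.map_C, ← hmsplit]
    norm_num
  -- setup constants
  set bigs := m.filter (fun z => 1 < Complex.abs z) with hbigs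
  set B := (bigs.map Complex.abs).prod with hB
  set r := Multiset.card bigs with hr
  set d := Multiset.card m with hd
  have hαbigs : α ∈ bigs := Multiset.mem_filter.mpr ⟨hαm, hα⟩
  have hrpos : 1 ≤ r := Multiset.card_pos.mpr (by
    intro h; rw [h] at hαbigs; simp at hαbigs)
  have hrd : r ≤ d := Multiset.card_le_card (Multiset.filter_le _ _)
  have hbigs_ge : ∀ x ∈ bigs.map Complex.abs, (1:ℝ) ≤ x := by
    intro x hx
    obtain ⟨z, hz, rfl⟩ := Multiset.mem_map.mp hx
    exact le_of_lt (Multiset.mem_filter.mp hz).2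
  have hB1 : (1:ℝ) ≤ B := mprod_one_le hbigs_ge
  have hB0 : (0:ℝ) < B := lt_of_lt_of_le zero_lt_one hB1
  -- choose ρ
  obtain ⟨ρ, hρhalf, hρ1, hsmall, hbig⟩ :
      ∃ ρ : ℝ, 1/2 ≤ ρ ∧ ρ < 1 ∧ (∀ z ∈ m, Complex.abs z < 1 → Complex.abs z ≤ ρ)
        ∧ (∀ z ∈ m, 1 < Complex.abs z → (Complex.abs z)⁻¹ ≤ ρ) := by
    set g : ℂ → ℝ := fun z => if Complex.abs z < 1 then Complex.abs z else (Complex.abs z)⁻¹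
      with hg
    set F : Finset ℝ := insert (1/2 : ℝ) (m.toFinset.image g) with hF
    have hFne : F.Nonempty := ⟨1/2, Finset.mem_insert_self _ _⟩
    refine ⟨F.max' hFne, Finset.le_max' F _ (Finset.mem_insert_self _ _), ?_, ?_, ?_⟩
    · have hmem := F.max'_mem hFne
      rcases Finset.mem_insert.mp hmem with h | h
      · linarith
      · obtain ⟨z, hz, hgz⟩ := Finset.mem_image.mp h
        have hzm : z ∈ m := Multiset.mem_toFinset.mp hz
        have hlt : g z < 1 := by
          by_cases h1 : Complex.abs z < 1
          · simpa [hg, h1] using h1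
          · have h2 : 1 < Complex.abs z := lt_of_le_of_ne (not_lt.mp h1) (Ne.symm (hne1 z hzm))
            simpa [hg, h1] using inv_lt_one_of_one_lt₀ h2
        linarith
    · intro z hz h1
      have : g z = Complex.abs z := if_pos h1
      rw [← this]
      exact Finset.le_max' F _ (Finset.mem_insert_of_mem
        (Finset.mem_image_of_mem g (Multiset.mem_toFinset.mpr hz)))
    · intro z hz h1
      have : g z = (Complex.abs z)⁻¹ := if_neg (not_lt.mpr (le_of_lt h1))
      rw [← this]
      exact Finset.le_max' F _ (Finset.mem_insert_of_mem
        (Finset.mem_image_of_mem g (Multiset.mem_toFinset.mpr hz)))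
  have hρ0 : 0 ≤ ρ := le_trans (by norm_num) hρhalf
  -- choose k, N
  set c₁ : ℝ := ((d:ℝ)+1) * 2^d with hc₁
  have hc₁pos : (0:ℝ) < c₁ := by positivity
  obtain ⟨k, hk⟩ : ∃ k : ℕ, (t+1) * c₁ * ρ ^ (2^k) < 1 := by
    have hApos : (0:ℝ) < (t+1) * c₁ := mul_pos (by linarith) hc₁pos
    set A := (t+1) * c₁ with hA
    obtain ⟨n, hn⟩ := exists_pow_lt_of_lt_one (show (0:ℝ) < 1/(A+1) by positivity) hρ1
    refine ⟨n, ?_⟩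
    have h1 : ρ ^ (2^n) ≤ ρ ^ n := pow_le_pow_of_le_one hρ0 hρ1.le (Nat.lt_two_pow_self).le
    have h2 : A * ρ^(2^n) ≤ A * ρ^n := mul_le_mul_of_nonneg_left h1 hApos.le
    have h3 : A * ρ^n < A * (1/(A+1)) := mul_lt_mul_of_pos_left hn hApos
    have h4 : A * (1/(A+1)) < 1 := by
      rw [mul_one_div, div_lt_one (by linarith)]; linarith
    linarith
  set N := 2^k with hN
  have hNpos : 0 < N := pow_pos (by norm_num) k
  -- get the iterated polynomial
  obtain ⟨P, c, hc, hPmap⟩ := graeffe_iterate m P0 ((b : ℤ) : ℂ) hbne hbase k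
  set s := m.map (fun z => z ^ N) with hs
  have hPmap' : P.map (Int.castRingHom ℂ) = C c * (s.map fun z => X - C z).prod := by
    rw [hPmap, hs]; rw [Multiset.map_map]; rfl
  -- coefficients of P
  have hscard : Multiset.card s = d := by rw [hs, Multiset.card_map]
  have hPcoeff : ∀ j, j ≤ d → (|P.coeff j| : ℝ)
      = Complex.abs c * Complex.abs (s.esymm (d - j)) := by
    intro j hj
    have h1 : ((P.coeff j : ℤ) : ℂ) = (P.map (Int.castRingHom ℂ)).coeff j := by rw [coeff_map]; rfl
    rw [hPmap', coeff_C_mul] at h1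
    have h2 : ((s.map fun z => X - C z).prod).coeff j
        = (-1)^(Multiset.card s - j) * s.esymm (Multiset.card s - j) :=
      Multiset.prod_X_sub_C_coeff s (by rw [hscard]; exact hj)
    calc (|P.coeff j| : ℝ) = Complex.abs ((P.coeff j : ℂ)) := (Complex.abs_intCast _).symm
      _ = Complex.abs (c * ((-1)^(Multiset.card s - j) * s.esymm (Multiset.card s - j))) := by
          rw [h1, h2]
      _ = Complex.abs c * Complex.abs (s.esymm (d - j)) := by
          rw [map_mul, map_mul, map_pow, hscard]
          simp
  -- natDegree of P
  have hsprod_monic : ((s.map fun z => X - C z).prod).Monic :=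
    monic_multiset_prod_of_monic _ _ fun z _ => monic_X_sub_C z
  have hsproddeg : ((s.map fun z => X - C z).prod).natDegree = d := by
    rw [Polynomial.natDegree_multiset_prod_of_monic _ (fun f hf => by
      obtain ⟨z, _, rfl⟩ := Multiset.mem_map.mp hf; exact monic_X_sub_C z)]
    simp [hscard, Multiset.map_map]
  have hPdeg : P.natDegree = d := by
    have h1 : (P.map (Int.castRingHom ℂ)).natDegree = d := by
      rw [hPmap', natDegree_C_mul hc, hsproddeg]
    rw [← h1, natDegree_map_eq_of_injective (fun a b h => by simpa using h)]
  have hP0' : P ≠ 0 := by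
    intro h
    rw [h, Polynomial.map_zero] at hPmap'
    have := hsprod_monic.ne_zero
    exact this (by
      have := hPmap'.symm
      rcases mul_eq_zero.mp this with h1 | h1
      · exact absurd h1 (C_ne_zero.mpr hc)
      · exact h1)
  -- define Q
  refine ⟨expand ℤ N P, ?_, ?_, N * (d - r), ?_, ?_⟩
  · intro h
    exact hP0' (by simpa using expand_injective hNpos (h.trans (map_zero (expand ℤ N)).symm))
  · -- aeval α Q = 0
    have h1 : aeval α (expand ℤ N P) = eval α ((expand ℤ N P).map (Int.castRingHom ℂ)) := by
      rw [aeval_def, eval₂_eq_eval_map, algebraMap_int_eq]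
    rw [h1, map_expand, expand_eval, hPmap', eval_mul, eval_C, eval_multiset_prod]
    have hmem : (0:ℂ) ∈ (s.map fun z => X - C z).map (eval (α ^ N)) := by
      rw [Multiset.map_map]
      apply Multiset.mem_map.mpr
      refine ⟨α ^ N, ?_, by simp⟩
      rw [hs]
      exact Multiset.mem_map_of_mem _ hαm
    rw [Multiset.prod_eq_zero hmem, mul_zero]
  · -- degree
    rw [natDegree_expand, hPdeg]
    have : d - r < d := by omega
    calc N * (d - r) = (d - r) * N := by ring
      _ < d * N := by
          exact (Nat.mul_lt_mul_right hNpos).mpr this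
  · -- the inequality
    have hcoeffQ : ∀ j, (expand ℤ N P).coeff (N * j) = P.coeff j := by
      intro j
      rw [coeff_expand hNpos, if_pos ⟨j, rfl⟩]
      congr 1
      exact Nat.mul_div_cancel_left j hNpos
    have hDeq : (expand ℤ N P).natDegree = d * N := by rw [natDegree_expand, hPdeg]
    have hmemrange : d - r ∈ Finset.range (d + 1) := Finset.mem_range.mpr (by omega)
    have hsum : ∑ i ∈ (Finset.range ((expand ℤ N P).natDegree + 1)).erase (N * (d - r)),
          (|(expand ℤ N P).coeff i| : ℝ)
        = ∑ j ∈ (Finset.range (d + 1)).erase (d - r), (|P.coeff j| : ℝ) := by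
      rw [hDeq]
      have himg : ((Finset.range (d + 1)).erase (d - r)).image (fun j => N * j)
          ⊆ (Finset.range (d * N + 1)).erase (N * (d - r)) := by
        intro i hi
        obtain ⟨j, hj, rfl⟩ := Finset.mem_image.mp hi
        obtain ⟨hjne, hjr⟩ := Finset.mem_erase.mp hj
        have hjd : j ≤ d := Nat.lt_succ_iff.mp (Finset.mem_range.mp hjr)
        refine Finset.mem_erase.mpr ⟨?_, Finset.mem_range.mpr ?_⟩
        · intro hcontra
          exact hjne (Nat.eq_of_mul_eq_mul_left hNpos hcontra)
        · have h1 : N * j ≤ N * d := Nat.mul_le_mul_left N hjd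
          have h2 : N * d = d * N := mul_comm N d
          omega
      have hvanish : ∀ i ∈ (Finset.range (d * N + 1)).erase (N * (d - r)),
          i ∉ ((Finset.range (d + 1)).erase (d - r)).image (fun j => N * j) →
          (|(expand ℤ N P).coeff i| : ℝ) = 0 := by
        intro i hib hni
        obtain ⟨hine, hir⟩ := Finset.mem_erase.mp hib
        by_cases hdvd : N ∣ i
        · obtain ⟨j, rfl⟩ := hdvd
          exfalso
          apply hni
          apply Finset.mem_image_of_mem
          refine Finset.mem_erase.mpr ⟨fun h => hine (by rw [h]), Finset.mem_range.mpr ?_⟩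
          have h1 : N * j ≤ d * N := Nat.lt_succ_iff.mp (Finset.mem_range.mp hir)
          have h2 : d * N = N * d := mul_comm d N
          have h3 : N * j ≤ N * d := by omega
          have h4 : j ≤ d := Nat.le_of_mul_le_mul_left h3 hNpos
          omega
        · rw [coeff_expand hNpos, if_neg hdvd]
          simp
      calc ∑ i ∈ (Finset.range (d * N + 1)).erase (N * (d - r)),
            (|(expand ℤ N P).coeff i| : ℝ)
          = ∑ i ∈ ((Finset.range (d + 1)).erase (d - r)).image (fun j => N * j),
            (|(expand ℤ N P).coeff i| : ℝ) := (Finset.sum_subset himg hvanish).symm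
        _ = ∑ j ∈ (Finset.range (d + 1)).erase (d - r), (|(expand ℤ N P).coeff (N * j)| : ℝ) :=
            Finset.sum_image (fun a _ b _ h => Nat.eq_of_mul_eq_mul_left hNpos h)
        _ = ∑ j ∈ (Finset.range (d + 1)).erase (d - r), (|P.coeff j| : ℝ) :=
            Finset.sum_congr rfl fun j _ => by rw [hcoeffQ]
    rw [hsum]
    have hce : (|(expand ℤ N P).coeff (N * (d - r))| : ℝ)
        = Complex.abs c * Complex.abs (s.esymm r) := by
      rw [hcoeffQ, hPcoeff (d - r) (Nat.sub_le d r), Nat.sub_sub_self hrd]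
    rw [hce]
    -- estimates
    have hchoose : ∀ i, i ≤ d → (d.choose i : ℝ) ≤ 2 ^ d := by
      intro i hi
      have h3 : d.choose i ≤ 2 ^ d := by
        calc d.choose i ≤ ∑ j ∈ Finset.range (d + 1), d.choose j :=
              Finset.single_le_sum (fun j _ => Nat.zero_le _) (Finset.mem_range.mpr (by omega))
          _ = 2 ^ d := Nat.sum_range_choose d
      exact_mod_cast h3
    have hρN : (0:ℝ) ≤ ρ ^ N := pow_nonneg hρ0 N
    have hBN : (0:ℝ) < B ^ N := pow_pos hB0 N
    have hBρN : ((B * ρ) ^ N : ℝ) = B ^ N * ρ ^ N := mul_pow B ρ N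
    have hcpos : 0 < Complex.abs c := AbsoluteValue.pos _ hc
    have hEr : B ^ N - (d.choose r : ℝ) * (B * ρ) ^ N ≤ Complex.abs (s.esymm r) :=
      abv_esymm_main m hnodup ρ hρ0 hne1 hsmall hbig N
    have hEr2 : B ^ N * (1 - 2 ^ d * ρ ^ N) ≤ Complex.abs (s.esymm r) := by
      have h1 := hchoose r hrd
      have h2 : (d.choose r : ℝ) * (B * ρ) ^ N ≤ 2 ^ d * (B ^ N * ρ ^ N) := by
        rw [hBρN]
        apply mul_le_mul_of_nonneg_right h1 (mul_nonneg hBN.le hρN)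
      nlinarith
    have hterm : ∀ j ∈ (Finset.range (d + 1)).erase (d - r),
        (|P.coeff j| : ℝ) ≤ Complex.abs c * (2 ^ d * (B ^ N * ρ ^ N)) := by
      intro j hj
      obtain ⟨hjne, hjr⟩ := Finset.mem_erase.mp hj
      have hjd : j ≤ d := Nat.lt_succ_iff.mp (Finset.mem_range.mp hjr)
      rw [hPcoeff j hjd]
      apply mul_le_mul_of_nonneg_left ?_ (AbsoluteValue.nonneg _ _)
      have hne : d - j ≠ r := fun h => hjne (by omega)
      have h1 := abv_esymm_le m ρ hρ0 hne1 hsmall hbig N (d - j) hne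
      refine le_trans h1 ?_
      rw [hBρN]
      apply mul_le_mul_of_nonneg_right (hchoose (d - j) (by omega))
        (mul_nonneg hBN.le hρN)
    have hS₁ : ∑ j ∈ (Finset.range (d + 1)).erase (d - r), (|P.coeff j| : ℝ)
        ≤ (d : ℝ) * (Complex.abs c * (2 ^ d * (B ^ N * ρ ^ N))) := by
      refine le_trans (Finset.sum_le_card_nsmul _ _ _ hterm) ?_
      rw [Finset.card_erase_of_mem hmemrange, Finset.card_range, nsmul_eq_mul]
      simp
    -- numeric conclusion
    have hd1 : (1:ℝ) ≤ (d:ℝ) := by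
      have : 1 ≤ d := le_trans hrpos hrd
      exact_mod_cast this
    have h2d : (1:ℝ) ≤ 2 ^ d := one_le_pow₀ (by norm_num)
    have hfinal : t * ((d : ℝ) * (Complex.abs c * (2 ^ d * (B ^ N * ρ ^ N))))
        < Complex.abs c * (B ^ N * (1 - 2 ^ d * ρ ^ N)) := by
      have h1 := numeric_aux t (d:ℝ) (2^d) (ρ^N) (Complex.abs c) (B^N)
        ht hd1 h2d hρN hcpos hBN (by rw [hc₁] at hk; exact hk)
      linarith [h1]
    have htS : t * ∑ j ∈ (Finset.range (d + 1)).erase (d - r), (|P.coeff j| : ℝ)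
        ≤ t * ((d : ℝ) * (Complex.abs c * (2 ^ d * (B ^ N * ρ ^ N)))) := by
      have := mul_le_mul_of_nonneg_left hS₁ (show (0:ℝ) ≤ t by linarith)
      linarith
    have hlast : Complex.abs c * (B ^ N * (1 - 2 ^ d * ρ ^ N))
        ≤ Complex.abs c * Complex.abs (s.esymm r) :=
      mul_le_mul_of_nonneg_left hEr2 (AbsoluteValue.nonneg _ _)
    linarith
end
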